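/- P(n, 1/4, 2) = 1: for every graph G on n vertices there is an edge partition E = E₀ ∪ E₁ such that |E₀| < n²/4 and the subgraph with edge set E₁ has diameter at most 2 (or E₁ is empty). -/

import Mathlib

/-- The subgraph spanned by the edge set `E'` (on the vertices covered by `E'`)
has diameter at most `d`. -/
def EdgeSetDiamLE {V : Type*} (E' : Set (Sym2 V)) (d : ℕ) : Prop :=
  ∀ a b : V, a ∈ (SimpleGraph.fromEdgeSet E').support →
    b ∈ (SimpleGraph.fromEdgeSet E').support →
    (SimpleGraph.fromEdgeSet E').edist a b ≤ d

set_option maxHeartbeats 800000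

open SimpleGraph Finset in
/-- P(n,1/4,2) = 1: every graph G on n ≥ 1 vertices admits an edge
partition E = E₀ ∪ E₁ with |E₀| < n²/4 and E₁ of diameter at most 2 (this holds
vacuously if E₁ is empty). -/
theorem stmt_9 {V : Type*} [Fintype V] [DecidableEq V] (G : SimpleGraph V)
    [DecidableRel G.Adj] (n : ℕ) (hn : n = Fintype.card V) (hpos : 0 < n) :
    ∃ E₀ E₁ : Finset (Sym2 V), Disjoint E₀ E₁ ∧ E₀ ∪ E₁ = G.edgeFinset ∧
      (E₀.card : ℝ) < (n : ℝ) ^ 2 / 4 ∧ EdgeSetDiamLE (↑E₁ : Set (Sym2 V)) 2 := by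
  classical
  have hne : Nonempty V := by
    rw [← Fintype.card_pos_iff]; omega
  obtain ⟨v, -, hv⟩ := Finset.exists_max_image (Finset.univ : Finset V) (fun u => G.degree u)
    ⟨Classical.arbitrary V, Finset.mem_univ _⟩
  set N : Finset V := insert v (G.neighborFinset v) with hN
  set P : Sym2 V → Prop := fun e => ∀ x ∈ e, x ∈ N with hP
  set E₁ : Finset (Sym2 V) := G.edgeFinset.filter P with hE₁
  set E₀ : Finset (Sym2 V) := G.edgeFinset.filter (fun e => ¬ P e) with hE₀
  refine ⟨E₀, E₁, ?_, ?_, ?_, ?_⟩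
  · exact (Finset.disjoint_filter_filter_not _ _ P).symm
  · rw [hE₀, hE₁, Finset.union_comm]
    exact Finset.filter_union_filter_not_eq P _
  · -- counting
    have hNcard : N.card = G.degree v + 1 := by
      rw [hN, Finset.card_insert_of_notMem (by simp), card_neighborFinset_eq_degree]
    have hsub : E₀ ⊆ (Finset.univ \ N).biUnion (fun u => G.incidenceFinset u) := by
      intro e he
      rw [hE₀, Finset.mem_filter] at he
      obtain ⟨heE, hne'⟩ := he
      obtain ⟨x, hx, hxN⟩ : ∃ x ∈ e, x ∉ N := by
        simpa [hP, not_forall] using hne'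
      exact Finset.mem_biUnion.2 ⟨x, by simp [hxN],
        (G.mem_incidenceFinset x e).2 ⟨(mem_edgeFinset.1 heE), hx⟩⟩
    have hcard : E₀.card ≤ (n - (G.degree v + 1)) * G.degree v := by
      calc E₀.card ≤ ((Finset.univ \ N).biUnion (fun u => G.incidenceFinset u)).card :=
            Finset.card_le_card hsub
        _ ≤ ∑ u ∈ Finset.univ \ N, (G.incidenceFinset u).card := Finset.card_biUnion_le
        _ ≤ ∑ u ∈ Finset.univ \ N, G.degree v := by
            refine Finset.sum_le_sum fun u _ => ?_
            rw [G.card_incidenceFinset_eq_degree u]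
            exact hv u (Finset.mem_univ u)
        _ = (Finset.univ \ N).card * G.degree v := by rw [Finset.sum_const, smul_eq_mul]
        _ = (n - (G.degree v + 1)) * G.degree v := by
            rw [Finset.card_sdiff_of_subset (Finset.subset_univ N), hNcard, Finset.card_univ, hn]
    have hdle : G.degree v + 1 ≤ n := by
      rw [hn]
      have := G.degree_lt_card_verts v
      omega
    calc (E₀.card : ℝ) ≤ ((n - (G.degree v + 1)) * G.degree v : ℕ) := by exact_mod_cast hcard
      _ = ((n : ℝ) - (G.degree v + 1)) * G.degree v := by
          push_cast [Nat.cast_sub hdle]; ring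
      _ < (n:ℝ)^2/4 := by
          set d : ℝ := (G.degree v : ℝ) with hd
          have hd0 : 0 ≤ d := Nat.cast_nonneg _
          have hdn : d + 1 ≤ (n:ℝ) := by rw [hd]; exact_mod_cast hdle
          have hn1 : (1:ℝ) ≤ n := by exact_mod_cast hpos
          nlinarith [sq_nonneg ((n:ℝ) - 1 - 2*d)]
  · -- diameter ≤ 2
    intro a b ha hb
    set H := SimpleGraph.fromEdgeSet (↑E₁ : Set (Sym2 V)) with hH
    have key : ∀ c : V, c ∈ H.support → c = v ∨ H.Adj c v := by
      intro c hc
      obtain ⟨d, hcd⟩ := hc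
      change H.Adj c d at hcd
      rw [hH, fromEdgeSet_adj] at hcd
      obtain ⟨hmem, hne'⟩ := hcd
      rw [Finset.mem_coe, hE₁, Finset.mem_filter] at hmem
      obtain ⟨hedge, hall⟩ := hmem
      have hcN : c ∈ N := hall c (Sym2.mem_mk_left c d)
      rw [hN, Finset.mem_insert, mem_neighborFinset] at hcN
      rcases hcN with h | h
      · exact Or.inl h
      · right
        rw [hH, fromEdgeSet_adj]
        refine ⟨?_, G.ne_of_adj h.symm⟩
        rw [Finset.mem_coe, hE₁, Finset.mem_filter]
        refine ⟨mem_edgeFinset.2 (by simpa using h.symm), ?_⟩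
        intro x hx
        rw [Sym2.mem_iff] at hx
        rcases hx with rfl | rfl
        · simp [hN, h]
        · simp [hN]
    have hav := key a ha
    have hbv := key b hb
    have h2 : ∀ c : V, c = v ∨ H.Adj c v → H.edist c v ≤ 1 := by
      rintro c (rfl | h)
      · simp
      · exact le_of_eq ((SimpleGraph.edist_eq_one_iff_adj).2 h)
    calc H.edist a b ≤ H.edist a v + H.edist v b := H.edist_triangle
      _ ≤ 1 + 1 := by
          refine add_le_add (h2 a hav) ?_
          rw [SimpleGraph.edist_comm]; exact h2 b hbv
      _ = 2 := by norm_num
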